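/- A finite special monoid is a group. Consequently, a special monoid has regular word problem if and only if it is a finite group. -/

import Mathlib

section FiniteMonoid

variable {M : Type*} [Monoid M] [Finite M]

lemma sp_isUnit_of_mul_eq_one {a b : M} (h : a * b = 1) : IsUnit a := by
  have hsurj : Function.Surjective (fun x : M => a * x) := fun y =>
    ⟨b * y, show a * (b * y) = y by rw [← mul_assoc, h, one_mul]⟩
  have hinj : Function.Injective (fun x : M => a * x) :=
    Finite.injective_iff_surjective.mpr hsurj
  have hba : b * a = 1 := hinj (show a * (b * a) = a * 1 by
    rw [← mul_assoc, h, one_mul, mul_one])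
  exact ⟨⟨a, b, h, hba⟩, rfl⟩

lemma sp_isUnit_left_of_isUnit_mul {a b : M} (h : IsUnit (a * b)) : IsUnit a := by
  obtain ⟨u, hu⟩ := h
  exact sp_isUnit_of_mul_eq_one (a := a) (b := b * ↑u⁻¹)
    (by rw [← mul_assoc, ← hu, Units.mul_inv])

lemma sp_isUnit_right_of_isUnit_mul {a b : M} (h : IsUnit (a * b)) : IsUnit b := by
  obtain ⟨u, hu⟩ := h
  have h1 : (↑u⁻¹ * a) * b = 1 := by rw [mul_assoc, ← hu, Units.inv_mul]
  obtain ⟨v, hv⟩ := sp_isUnit_of_mul_eq_one h1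
  have hvb : ↑v * b = 1 := by rw [hv]; exact h1
  have hb : b = ↑v⁻¹ := by
    calc b = ↑v⁻¹ * (↑v * b) := by rw [← mul_assoc, Units.inv_mul, one_mul]
    _ = ↑v⁻¹ := by rw [hvb, mul_one]
  exact hb ▸ (v⁻¹).isUnit

lemma sp_isUnit_middle {a b c : M} (h : a * b * c = 1) : IsUnit b :=
  sp_isUnit_right_of_isUnit_mul (sp_isUnit_left_of_isUnit_mul (h ▸ isUnit_one))

end FiniteMonoid

lemma sp_split_unique {α : Type*} {l1 l2 r1 r2 : List (Option α)}
    (h : l1 ++ none :: r1 = l2 ++ none :: r2) (h1 : none ∉ l1) (h2 : none ∉ l2) :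
    l1 = l2 ∧ r1 = r2 := by
  induction l1 generalizing l2 with
  | nil =>
    cases l2 with
    | nil => simpa using h
    | cons b t =>
      simp only [List.nil_append, List.cons_append, List.cons.injEq] at h
      exact absurd (h.1 ▸ (List.mem_cons_self (a := b) (l := t))) h2
  | cons a t1 ih =>
    cases l2 with
    | nil =>
      simp only [List.nil_append, List.cons_append, List.cons.injEq] at h
      exact absurd (h.1 ▸ (List.mem_cons_self (a := a) (l := t1))) h1
    | cons b t2 =>
      simp only [List.cons_append, List.cons.injEq] at h
      obtain ⟨hab, htl⟩ := h
      have := ih htl (fun hm => h1 (List.mem_cons_of_mem a hm))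
        (fun hm => h2 (List.mem_cons_of_mem b hm))
      exact ⟨by rw [hab, this.1], this.2⟩

section Part1

variable {A : Type*} (S : Finset (FreeMonoid A)) (c : Con (FreeMonoid A))
  (hc : c = conGen (fun x y => x ∈ S ∧ y = 1))

include hc in
lemma sp_letter_mem (hfin : Finite c.Quotient) (a : A) :
    ∃ w ∈ S, a ∈ FreeMonoid.toList w := by
  haveI := Classical.decEq A
  by_contra hno
  push_neg at hno
  set φ : FreeMonoid A →* Multiplicative ℕ :=
    FreeMonoid.lift (fun x => if x = a then Multiplicative.ofAdd 1 else 1) with hφ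
  have hvanish : ∀ w : FreeMonoid A, a ∉ FreeMonoid.toList w → φ w = 1 := by
    intro w
    induction w using FreeMonoid.recOn with
    | one => intro _; exact map_one φ
    | of_mul x xs ih =>
      intro hmem
      rw [map_mul, ih (fun h => hmem (by simp [h])), mul_one, hφ, FreeMonoid.lift_eval_of]
      have hxa : x ≠ a := fun h => hmem (by simp [h])
      simp [hxa]
  have hle : c ≤ Con.ker φ := by
    rw [hc]
    refine Con.conGen_le.mpr fun x y hxy => ?_
    rw [Con.ker_rel, hxy.2, map_one]
    exact hvanish x (hno x hxy.1)
  set ψ := c.lift φ hle with hψ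
  have hg : Function.Injective (fun n : ℕ => c.mk' ((FreeMonoid.of a) ^ n)) := by
    intro n m hnm
    have h1 : ∀ k : ℕ, ψ (c.mk' ((FreeMonoid.of a) ^ k)) = Multiplicative.ofAdd k := by
      intro k
      rw [hψ, Con.lift_mk', map_pow, hφ, FreeMonoid.lift_eval_of, if_pos rfl]
      simp [← ofAdd_nsmul]
    have := congrArg ψ hnm
    rw [h1, h1] at this
    exact Multiplicative.ofAdd.injective this
  have := Finite.of_injective _ hg
  exact not_finite ℕ

include hc in
lemma sp_isUnit_all (hfin : Finite c.Quotient) : ∀ x : c.Quotient, IsUnit x := by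
  have hletter : ∀ a : A, IsUnit (c.mk' (FreeMonoid.of a)) := by
    intro a
    obtain ⟨w, hwS, haw⟩ := sp_letter_mem S c hc hfin a
    obtain ⟨s, t, hst⟩ := List.append_of_mem haw
    have hw : w = FreeMonoid.ofList s * FreeMonoid.of a * FreeMonoid.ofList t := by
      have : FreeMonoid.ofList (FreeMonoid.toList w) = w := FreeMonoid.ofList_toList w
      rw [← this, hst, FreeMonoid.ofList_append, FreeMonoid.ofList_cons, mul_assoc]
    have hw1 : c.mk' w = 1 := by
      have hcw : c w 1 := by rw [hc]; exact ConGen.Rel.of _ _ ⟨hwS, rfl⟩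
      have : c.mk' w = c.mk' 1 := c.eq.mpr hcw
      rwa [map_one] at this
    rw [hw, map_mul, map_mul] at hw1
    exact sp_isUnit_middle hw1 -- needs finite instance
  intro x
  obtain ⟨w, rfl⟩ := Con.mk'_surjective x
  induction w using FreeMonoid.recOn with
  | one => rw [map_one]; exact isUnit_one
  | of_mul x xs ih => rw [map_mul]; exact (hletter x).mul ih

end Part1

/-- The word problem of a monoid `M` with respect to a generating set `A`
(given by the canonical map `π : A* → M`), as a language over `A ∪ {#}`
(modeled by `Option A`, with `none` playing the role of `#`). -/
def WordProblem {M : Type*} [Monoid M] {A : Type*} (π : FreeMonoid A →* M) :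
    Language (Option A) :=
  {w : List (Option A) | ∃ u v : List A, π (FreeMonoid.ofList u) = π (FreeMonoid.ofList v) ∧
    w = u.map some ++ none :: (v.map some).reverse}

section WpDFA

variable {A N : Type*} [Monoid N] (π : FreeMonoid A →* N)

def wpDFA : DFA (Option A) (Option (N ⊕ N × N)) where
  step s x := match s, x with
    | none, _ => none
    | some (Sum.inl m), some a => some (Sum.inl (m * π (FreeMonoid.of a)))
    | some (Sum.inl m), none => some (Sum.inr (m, 1))
    | some (Sum.inr (m, r)), some a => some (Sum.inr (m, π (FreeMonoid.of a) * r))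
    | some (Sum.inr _), none => none
  start := some (Sum.inl 1)
  accept := {s | ∃ m, s = some (Sum.inr (m, m))}

lemma wp_eval1 (m : N) (u : List A) :
    (wpDFA π).evalFrom (some (Sum.inl m)) (u.map some)
      = some (Sum.inl (m * π (FreeMonoid.ofList u))) := by
  induction u generalizing m with
  | nil => simp [DFA.evalFrom, FreeMonoid.ofList_nil]
  | cons a u ih =>
    show (wpDFA π).evalFrom ((wpDFA π).step _ _) (u.map some) = _
    rw [show (wpDFA π).step (some (Sum.inl m)) (some a)
        = some (Sum.inl (m * π (FreeMonoid.of a))) from rfl, ih]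
    rw [FreeMonoid.ofList_cons, map_mul, mul_assoc]

lemma wp_eval2 (m r : N) (v : List A) :
    (wpDFA π).evalFrom (some (Sum.inr (m, r))) ((v.map some).reverse)
      = some (Sum.inr (m, π (FreeMonoid.ofList v) * r)) := by
  induction v generalizing r with
  | nil => simp [DFA.evalFrom, FreeMonoid.ofList_nil]
  | cons a v ih =>
    rw [List.map_cons, List.reverse_cons, DFA.evalFrom_append_singleton, ih]
    rw [show (wpDFA π).step (some (Sum.inr (m, π (FreeMonoid.ofList v) * r))) (some a)
        = some (Sum.inr (m, π (FreeMonoid.of a) * (π (FreeMonoid.ofList v) * r))) from rfl]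
    rw [FreeMonoid.ofList_cons, map_mul, mul_assoc]

lemma wp_struct (w : List (Option A)) :
    (∀ m, (wpDFA π).evalFrom (wpDFA π).start w = some (Sum.inl m) →
      ∃ u : List A, w = u.map some ∧ m = π (FreeMonoid.ofList u)) ∧
    (∀ m r, (wpDFA π).evalFrom (wpDFA π).start w = some (Sum.inr (m, r)) →
      ∃ u v : List A, w = u.map some ++ none :: (v.map some).reverse ∧
        m = π (FreeMonoid.ofList u) ∧ r = π (FreeMonoid.ofList v)) := by
  induction w using List.reverseRecOn with
  | nil =>
    constructor
    · intro m hm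
      refine ⟨[], by simp, ?_⟩
      have : (some (Sum.inl 1) : Option (N ⊕ N × N)) = some (Sum.inl m) := hm
      simp only [Option.some.injEq, Sum.inl.injEq] at this
      simp [← this, FreeMonoid.ofList_nil]
    · intro m r hm
      exact absurd hm (by simp [DFA.evalFrom, wpDFA])
  | append_singleton w x ih =>
    obtain ⟨ih1, ih2⟩ := ih
    rw [DFA.evalFrom_append_singleton]
    rcases hE : (wpDFA π).evalFrom (wpDFA π).start w with _ | m' | ⟨m', r'⟩
    · constructor
      · intro m hm; exact absurd hm (by cases x <;> simp [wpDFA])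
      · intro m r hm; exact absurd hm (by cases x <;> simp [wpDFA])
    · rcases x with _ | a
      · constructor
        · intro m hm; exact absurd hm (by simp [wpDFA])
        · intro m r hm
          have : (some (Sum.inr (m', (1:N))) : Option (N ⊕ N × N)) = some (Sum.inr (m, r)) := hm
          simp only [Option.some.injEq, Sum.inr.injEq, Prod.mk.injEq] at this
          obtain ⟨hm', hr⟩ := this
          obtain ⟨u, hu, hmu⟩ := ih1 m' hE
          exact ⟨u, [], by simp [hu], by rw [← hm', hmu], by simp [← hr, FreeMonoid.ofList_nil]⟩
      · constructor
        · intro m hm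
          have : (some (Sum.inl (m' * π (FreeMonoid.of a))) : Option (N ⊕ N × N))
              = some (Sum.inl m) := hm
          simp only [Option.some.injEq, Sum.inl.injEq] at this
          obtain ⟨u, hu, hmu⟩ := ih1 m' hE
          refine ⟨u ++ [a], by simp [hu], ?_⟩
          rw [← this, hmu, FreeMonoid.ofList_append, map_mul, FreeMonoid.ofList_singleton]
        · intro m r hm; exact absurd hm (by simp [wpDFA])
    · rcases x with _ | a
      · constructor
        · intro m hm; exact absurd hm (by simp [wpDFA])
        · intro m r hm; exact absurd hm (by simp [wpDFA])
      · constructor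
        · intro m hm; exact absurd hm (by simp [wpDFA])
        · intro m r hm
          have : (some (Sum.inr (m', π (FreeMonoid.of a) * r')) : Option (N ⊕ N × N))
              = some (Sum.inr (m, r)) := hm
          simp only [Option.some.injEq, Sum.inr.injEq, Prod.mk.injEq] at this
          obtain ⟨hm', hr⟩ := this
          obtain ⟨u, v, hw, hmu, hrv⟩ := ih2 m' r' hE
          refine ⟨u, a :: v, ?_, hm' ▸ hmu, ?_⟩
          · simp [hw, List.append_assoc]
          · rw [← hr, hrv, FreeMonoid.ofList_cons, map_mul]

lemma wp_accepts : (wpDFA π).accepts = WordProblem π := by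
  ext w
  rw [DFA.mem_accepts]
  constructor
  · rintro ⟨m, hm⟩
    obtain ⟨u, v, hw, hmu, hmv⟩ := (wp_struct π w).2 m m hm
    exact ⟨u, v, by rw [← hmu, ← hmv], hw⟩
  · rintro ⟨u, v, hπ, rfl⟩
    have h1 : u.map some ++ none :: (v.map some).reverse
        = (u.map some ++ [none]) ++ (v.map some).reverse := by simp
    rw [show (wpDFA π).eval = (wpDFA π).evalFrom (wpDFA π).start from rfl, h1,
      DFA.evalFrom_of_append, DFA.evalFrom_of_append,
      show (wpDFA π).start = some (Sum.inl (1:N)) from rfl, wp_eval1]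
    rw [show (wpDFA π).evalFrom (some (Sum.inl (1 * π (FreeMonoid.ofList u)))) [none]
        = some (Sum.inr (1 * π (FreeMonoid.ofList u), 1)) from rfl, wp_eval2]
    exact ⟨π (FreeMonoid.ofList u), by rw [one_mul, mul_one, hπ]⟩

end WpDFA

section Main

variable {A : Type*}

lemma sp_regular_imp_finite (S : Finset (FreeMonoid A)) (c : Con (FreeMonoid A))
    (hreg : (WordProblem c.mk').IsRegular) : Finite c.Quotient := by
  obtain ⟨σ, fσ, M, hM⟩ := hreg
  haveI := fσ
  have hrep : ∀ q : c.Quotient, ∃ w, c.mk' w = q := Con.mk'_surjective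
  choose rep hrep' using hrep
  set f : c.Quotient → σ := fun q =>
    M.evalFrom M.start ((FreeMonoid.toList (rep q)).map some ++ [none]) with hf
  have estep : ∀ (l : List A) (r : List (Option A)),
      M.evalFrom M.start (l.map some ++ none :: r)
        = M.evalFrom (M.evalFrom M.start (l.map some ++ [none])) r := by
    intro l r
    rw [show l.map some ++ none :: r = (l.map some ++ [none]) ++ r by simp,
      DFA.evalFrom_of_append]
  have hofl : ∀ q, c.mk' (FreeMonoid.ofList (FreeMonoid.toList (rep q))) = q := fun q => by
    rw [FreeMonoid.ofList_toList, hrep']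
  have hinj : Function.Injective f := by
    intro q q' hqq'
    have hw1 : ((FreeMonoid.toList (rep q)).map some
        ++ none :: ((FreeMonoid.toList (rep q)).map some).reverse) ∈ WordProblem c.mk' :=
      ⟨FreeMonoid.toList (rep q), FreeMonoid.toList (rep q), rfl, rfl⟩
    rw [← hM] at hw1
    have hw1' : M.evalFrom M.start ((FreeMonoid.toList (rep q)).map some
        ++ none :: ((FreeMonoid.toList (rep q)).map some).reverse) ∈ M.accept :=
      (DFA.mem_accepts (M := M)).mp hw1
    rw [estep] at hw1'
    have hw2 : M.evalFrom (f q') ((FreeMonoid.toList (rep q)).map some).reverse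
        ∈ M.accept := hqq' ▸ hw1'
    have hw2' : M.evalFrom M.start ((FreeMonoid.toList (rep q')).map some
        ++ none :: ((FreeMonoid.toList (rep q)).map some).reverse) ∈ M.accept := by
      rw [estep]; exact hw2
    have hw2acc : ((FreeMonoid.toList (rep q')).map some
        ++ none :: ((FreeMonoid.toList (rep q)).map some).reverse) ∈ M.accepts :=
      (DFA.mem_accepts (M := M)).mpr hw2'
    rw [hM] at hw2acc
    obtain ⟨u, v, hπ, heq⟩ := hw2acc
    have hsplit := sp_split_unique heq (by simp) (by simp)
    have hu : FreeMonoid.toList (rep q') = u :=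
      List.map_injective_iff.mpr (Option.some_injective A) hsplit.1
    have hv : FreeMonoid.toList (rep q) = v :=
      List.map_injective_iff.mpr (Option.some_injective A)
        (List.reverse_injective hsplit.2)
    rw [← hu, ← hv, hofl, hofl] at hπ
    exact hπ.symm
  exact Finite.of_injective f hinj

end Main

/-- A finite special monoid is a group. Consequently, a special monoid has regular word
problem if and only if it is a finite group.

Here the special monoid `Mon⟨A | w = 1 (w ∈ S)⟩` is realized as the quotient of the free
monoid on the finite alphabet `A` by the congruence generated by the pairs `(w, 1)` for the
finitely many relators `w ∈ S`. -/
theorem special_monoid_regular_word_problem_iff_finite_group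
    {A : Type*} [Fintype A] (S : Finset (FreeMonoid A))
    (c : Con (FreeMonoid A)) (hc : c = conGen (fun x y => x ∈ S ∧ y = 1)) :
    (Finite c.Quotient → ∀ x : c.Quotient, IsUnit x) ∧
    ((WordProblem c.mk').IsRegular ↔ (Finite c.Quotient ∧ ∀ x : c.Quotient, IsUnit x)) := by
  refine ⟨sp_isUnit_all S c hc, ?_, ?_⟩
  · intro hreg
    have hfin := sp_regular_imp_finite S c hreg
    exact ⟨hfin, sp_isUnit_all S c hc hfin⟩
  · rintro ⟨hfin, -⟩
    haveI : Fintype c.Quotient := Fintype.ofFinite _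
    haveI : Fintype (Option (c.Quotient ⊕ c.Quotient × c.Quotient)) := inferInstance
    refine ⟨Fin (Fintype.card (Option (c.Quotient ⊕ c.Quotient × c.Quotient))),
      inferInstance, DFA.reindex (Fintype.equivFin _) (wpDFA c.mk'), ?_⟩
    rw [DFA.accepts_reindex, wp_accepts]
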